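/- Convergence of the Eisenberg–Noe cascade iteration: the iterates p^(n) = F(p^(n−1)) started from p^(0) = 1 (the all-ones vector) form a componentwise nonincreasing sequence that converges to the greatest fixed point p̂ of F in [0,1]^N; dually, the iterates started from p^(0) = 0 form a componentwise nondecreasing sequence that converges to the least fixed point p̌ of F in [0,1]^N. -/

import Mathlib

open Finset

/-- The Eisenberg–Noe clearing map. -/
noncomputable def ENmap {N : ℕ} (Ω : Fin N → Fin N → ℝ) (A C D : Fin N → ℝ)
    (p : Fin N → ℝ) : Fin N → ℝ := fun i =>
  if (∑ j, Ω i j) = 0 then 0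
  else min 1 (max 0 ((A i + C i - D i + ∑ j, Ω j i * p j) / ∑ j, Ω i j))

lemma ENmap_mono {N : ℕ} (Ω : Fin N → Fin N → ℝ) (hΩ : ∀ i j, 0 ≤ Ω i j)
    (A C D : Fin N → ℝ) {p q : Fin N → ℝ} (h : ∀ i, p i ≤ q i) :
    ∀ i, ENmap Ω A C D p i ≤ ENmap Ω A C D q i := by
  intro i
  unfold ENmap
  by_cases hs : (∑ j, Ω i j) = 0
  · simp [hs]
  · simp only [hs, if_false]
    have hspos : 0 < ∑ j, Ω i j :=
      lt_of_le_of_ne (Finset.sum_nonneg fun j _ => hΩ i j) (Ne.symm hs)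
    have hnum : A i + C i - D i + ∑ j, Ω j i * p j
        ≤ A i + C i - D i + ∑ j, Ω j i * q j := by
      apply add_le_add le_rfl
      exact Finset.sum_le_sum fun j _ => mul_le_mul_of_nonneg_left (h j) (hΩ j i)
    exact min_le_min le_rfl (max_le_max le_rfl
      (div_le_div_of_nonneg_right hnum hspos.le))

lemma ENmap_mem {N : ℕ} (Ω : Fin N → Fin N → ℝ) (A C D : Fin N → ℝ)
    (p : Fin N → ℝ) (i : Fin N) : ENmap Ω A C D p i ∈ Set.Icc (0:ℝ) 1 := by
  unfold ENmap
  by_cases hs : (∑ j, Ω i j) = 0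
  · simp [hs]
  · simp only [hs, if_false]
    constructor
    · exact le_min zero_le_one (le_max_left _ _)
    · exact min_le_left _ _

lemma ENmap_cont {N : ℕ} (Ω : Fin N → Fin N → ℝ) (A C D : Fin N → ℝ) :
    Continuous (ENmap Ω A C D) := by
  apply continuous_pi
  intro i
  unfold ENmap
  by_cases hs : (∑ j, Ω i j) = 0
  · simp [hs]; exact continuous_const
  · simp only [hs, if_false]
    apply Continuous.min continuous_const
    apply Continuous.max continuous_const
    apply Continuous.div_const
    exact (continuous_const.add (continuous_finset_sum _ fun j _ =>
      continuous_const.mul (continuous_apply j)))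

/-- Convergence of the Eisenberg–Noe cascade iteration: the iterates started
from the all-ones vector form a componentwise nonincreasing sequence converging
to the greatest fixed point of the clearing map in `[0,1]^N`; dually, the
iterates started from the zero vector form a componentwise nondecreasing
sequence converging to the least fixed point. -/
theorem EN_cascade_convergence {N : ℕ} (hN : 1 ≤ N)
    (Ω : Fin N → Fin N → ℝ) (hΩ : ∀ i j, 0 ≤ Ω i j) (hdiag : ∀ i, Ω i i = 0)
    (A C D : Fin N → ℝ) (hA : ∀ i, 0 ≤ A i) (hC : ∀ i, 0 ≤ C i)
    (hD : ∀ i, 0 ≤ D i) :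
    ∃ phat pcheck : Fin N → ℝ,
      -- phat and pcheck are fixed points in [0,1]^N
      (∀ i, phat i ∈ Set.Icc (0 : ℝ) 1) ∧ ENmap Ω A C D phat = phat ∧
      (∀ i, pcheck i ∈ Set.Icc (0 : ℝ) 1) ∧ ENmap Ω A C D pcheck = pcheck ∧
      -- phat is the greatest and pcheck the least fixed point in [0,1]^N
      (∀ p : Fin N → ℝ, (∀ i, p i ∈ Set.Icc (0 : ℝ) 1) →
        ENmap Ω A C D p = p → (∀ i, pcheck i ≤ p i) ∧ (∀ i, p i ≤ phat i)) ∧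
      -- the iterates from the all-ones vector are componentwise nonincreasing
      (∀ n : ℕ, ∀ i, (ENmap Ω A C D)^[n + 1] (1 : Fin N → ℝ) i ≤
        (ENmap Ω A C D)^[n] (1 : Fin N → ℝ) i) ∧
      -- and converge to phat
      Filter.Tendsto (fun n => (ENmap Ω A C D)^[n] (1 : Fin N → ℝ))
        Filter.atTop (nhds phat) ∧
      -- the iterates from the zero vector are componentwise nondecreasing
      (∀ n : ℕ, ∀ i, (ENmap Ω A C D)^[n] (0 : Fin N → ℝ) i ≤
        (ENmap Ω A C D)^[n + 1] (0 : Fin N → ℝ) i) ∧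
      -- and converge to pcheck
      Filter.Tendsto (fun n => (ENmap Ω A C D)^[n] (0 : Fin N → ℝ))
        Filter.atTop (nhds pcheck) := by
  set F := ENmap Ω A C D with hF
  have mono := fun {p q : Fin N → ℝ} (h : ∀ i, p i ≤ q i) =>
    ENmap_mono Ω hΩ A C D h
  have mem := ENmap_mem Ω A C D
  -- iterates from 1
  set q : ℕ → Fin N → ℝ := fun n => F^[n] (1 : Fin N → ℝ) with hq
  set r : ℕ → Fin N → ℝ := fun n => F^[n] (0 : Fin N → ℝ) with hr
  have qsucc : ∀ n, q (n + 1) = F (q n) := fun n => Function.iterate_succ_apply' F n 1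
  have rsucc : ∀ n, r (n + 1) = F (r n) := fun n => Function.iterate_succ_apply' F n 0
  have qanti : ∀ n i, q (n + 1) i ≤ q n i := by
    intro n
    induction n with
    | zero => intro i; rw [qsucc]; exact (mem _ i).2
    | succ k ih =>
      intro i
      calc q (k + 2) i = F (q (k + 1)) i := congrFun (qsucc (k+1)) i
        _ ≤ F (q k) i := mono ih i
        _ = q (k + 1) i := (congrFun (qsucc k) i).symm
  have rmono : ∀ n i, r n i ≤ r (n + 1) i := by
    intro n
    induction n with
    | zero => intro i; rw [rsucc]; exact (mem _ i).1
    | succ k ih =>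
      intro i
      calc r (k + 1) i = F (r k) i := congrFun (rsucc k) i
        _ ≤ F (r (k + 1)) i := mono ih i
        _ = r (k + 2) i := (congrFun (rsucc (k+1)) i).symm
  have q01 : ∀ n i, q n i ∈ Set.Icc (0:ℝ) 1 := by
    intro n i
    cases n with
    | zero => simp [hq]
    | succ k => rw [qsucc]; exact mem _ i
  have r01 : ∀ n i, r n i ∈ Set.Icc (0:ℝ) 1 := by
    intro n i
    cases n with
    | zero => simp [hr]
    | succ k => rw [rsucc]; exact mem _ i
  set phat : Fin N → ℝ := fun i => ⨅ n, q n i with hphat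
  set pcheck : Fin N → ℝ := fun i => ⨆ n, r n i with hpcheck
  have qbdd : ∀ i, BddBelow (Set.range fun n => q n i) := fun i =>
    ⟨0, by rintro x ⟨n, rfl⟩; exact (q01 n i).1⟩
  have rbdd : ∀ i, BddAbove (Set.range fun n => r n i) := fun i =>
    ⟨1, by rintro x ⟨n, rfl⟩; exact (r01 n i).2⟩
  have qtend : Filter.Tendsto q Filter.atTop (nhds phat) := by
    rw [tendsto_pi_nhds]
    intro i
    exact tendsto_atTop_ciInf (antitone_nat_of_succ_le fun n => qanti n i) (qbdd i)
  have rtend : Filter.Tendsto r Filter.atTop (nhds pcheck) := by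
    rw [tendsto_pi_nhds]
    intro i
    exact tendsto_atTop_ciSup (monotone_nat_of_le_succ fun n => rmono n i) (rbdd i)
  have qfix : F phat = phat := by
    have h1 : Filter.Tendsto (fun n => F (q n)) Filter.atTop (nhds (F phat)) :=
      ((ENmap_cont Ω A C D).tendsto phat).comp qtend
    have h2 : Filter.Tendsto (fun n => q (n + 1)) Filter.atTop (nhds phat) :=
      qtend.comp (Filter.tendsto_add_atTop_nat 1)
    have : (fun n => q (n + 1)) = fun n => F (q n) := funext qsucc
    rw [this] at h2
    exact tendsto_nhds_unique h1 h2
  have rfix : F pcheck = pcheck := by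
    have h1 : Filter.Tendsto (fun n => F (r n)) Filter.atTop (nhds (F pcheck)) :=
      ((ENmap_cont Ω A C D).tendsto pcheck).comp rtend
    have h2 : Filter.Tendsto (fun n => r (n + 1)) Filter.atTop (nhds pcheck) :=
      rtend.comp (Filter.tendsto_add_atTop_nat 1)
    have : (fun n => r (n + 1)) = fun n => F (r n) := funext rsucc
    rw [this] at h2
    exact tendsto_nhds_unique h1 h2
  have phat01 : ∀ i, phat i ∈ Set.Icc (0:ℝ) 1 := by
    intro i
    constructor
    · exact le_ciInf fun n => (q01 n i).1
    · exact le_trans (ciInf_le (qbdd i) 0) (q01 0 i).2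
  have pcheck01 : ∀ i, pcheck i ∈ Set.Icc (0:ℝ) 1 := by
    intro i
    constructor
    · exact le_trans (r01 0 i).1 (le_ciSup (rbdd i) 0)
    · exact ciSup_le fun n => (r01 n i).2
  refine ⟨phat, pcheck, phat01, qfix, pcheck01, rfix, ?_, qanti, qtend, rmono, rtend⟩
  intro p hp hpfix
  have hub : ∀ n i, p i ≤ q n i := by
    intro n
    induction n with
    | zero => intro i; simpa [hq] using (hp i).2
    | succ k ih =>
      intro i
      calc p i = F p i := (congrFun hpfix i).symm
        _ ≤ F (q k) i := mono ih i
        _ = q (k + 1) i := (congrFun (qsucc k) i).symm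
  have hlb : ∀ n i, r n i ≤ p i := by
    intro n
    induction n with
    | zero => intro i; simpa [hr] using (hp i).1
    | succ k ih =>
      intro i
      calc r (k + 1) i = F (r k) i := congrFun (rsucc k) i
        _ ≤ F p i := mono ih i
        _ = p i := congrFun hpfix i
  exact ⟨fun i => ciSup_le fun n => hlb n i, fun i => le_ciInf fun n => hub n i⟩
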